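/- (Converse Slack Theorem) Let C be the canonical representation of interval order P and R an integral representation of P. If for every pair (x,y) with y not below x, s_C(x,y) = 0 implies s_R(x,y) = 0, then R is obtained from C by adding a single fixed integer t to every interval endpoint of C. -/

import Mathlib

/-- Converse Slack Theorem: if every zero slack of the canonical representation is also
zero in an integral representation `R`, then `R` is a shift of the canonical
representation by a fixed integer. -/
theorem stmt_8 {α : Type*} [Fintype α] [PartialOrder α] (m : ℕ) (lc rc : α → ℕ)
    (hclr : ∀ x, lc x ≤ rc x) (hcrep : ∀ x y : α, x < y ↔ rc x + 1 ≤ lc y)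
    (hcm : ∀ x, rc x < m) (hcan : ∀ i < m, (∃ x, lc x = i) ∧ (∃ x, rc x = i))
    (l r : α → ℤ) (hlr : ∀ x, l x ≤ r x) (hrep : ∀ x y : α, x < y ↔ r x + 1 ≤ l y)
    (h1 : ∀ x y : α, x < y → (lc y : ℤ) - (rc x : ℤ) - 1 = 0 → l y - r x - 1 = 0)
    (h2 : ∀ x y : α, x ≠ y → ¬ x < y → ¬ y < x →
      (rc y : ℤ) - (lc x : ℤ) = 0 → r y - l x = 0)
    (h3 : ∀ x : α, (rc x : ℤ) - (lc x : ℤ) = 0 → r x - l x = 0) :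
    ∃ t : ℤ, ∀ x : α, l x = (lc x : ℤ) + t ∧ r x = (rc x : ℤ) + t := by
  -- Key lemma: if the right canonical endpoint of z equals the left canonical
  -- endpoint of x, then r z = l x.
  have key : ∀ z x : α, rc z = lc x → r z = l x := by
    intro z x hz
    by_cases hzx : z = x
    · subst hzx
      have := h3 z (by omega)
      omega
    · have hnxz : ¬ x < z := by
        rw [hcrep]
        have := hclr z
        have := hclr x
        omega
      have hnzx : ¬ z < x := by
        rw [hcrep]; omega
      have := h2 x z (Ne.symm hzx) hnxz hnzx (by omega)
      omega
  rcases Nat.eq_zero_or_pos m with hm | hm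
  · exact ⟨0, fun x => absurd (hcm x) (by omega)⟩
  · obtain ⟨⟨w, hw⟩, -⟩ := hcan 0 hm
    set t := l w with ht
    have Q : ∀ i, i < m → ∀ z, rc z = i → r z = (i : ℤ) + t := by
      intro i
      induction i with
      | zero =>
        intro _ z hz
        rw [key z w (by rw [hz, hw])]
        simp [ht]
      | succ i ih =>
        intro hi z hz
        obtain ⟨-, z', hz'⟩ := hcan i (by omega)
        obtain ⟨⟨y, hy⟩, -⟩ := hcan (i + 1) hi
        have hr' : r z' = (i : ℤ) + t := ih (by omega) z' hz'
        have hlt : z' < y := by rw [hcrep]; omega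
        have hslack := h1 z' y hlt (by omega)
        have hkey := key z y (by rw [hz, hy])
        push_cast
        omega
    refine ⟨t, fun x => ?_⟩
    have hrc := hcm x
    have hlc : lc x < m := lt_of_le_of_lt (hclr x) hrc
    obtain ⟨-, z, hz⟩ := hcan (lc x) hlc
    have ha := key z x hz
    have hb := Q (lc x) hlc z hz
    have hc := Q (rc x) hrc x rfl
    exact ⟨by omega, by omega⟩
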